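/- With B = [[I_{n−1}, 0],[β^k, Δ]] where β^k = (0,…,0,Δ−1,…,Δ−1) ∈ ℤ^{n−1} has k zeros, Δ − n + k ≥ 1, and P(B) := {x ∈ ℝⁿ : 0 ≤ Bx ≤ u} with u = (1,…,1, Δ−n+k, 1,…,1)ᵀ (k ones, then Δ−n+k, then n−k−1 ones), the number of integer points in P(B) is exactly 2^k. -/
import Mathlib


open Matrix

/-- The parallelepiped `P(B) = {x : 0 ≤ Bx ≤ u}` from Section 5 contains exactly
`2^k` integer points. -/
theorem stmt14 (n k : ℕ) (hkn : k ≤ n - 1) (hn : 2 ≤ n) (Δ : ℤ)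
    (hΔ : 1 ≤ Δ - n + k)
    (B : Matrix (Fin n) (Fin n) ℤ)
    (hB : B = fun (i j : Fin n) => if (i : ℕ) < n - 1 then (if i = j then 1 else 0)
      else (if (j : ℕ) < k then 0 else if (j : ℕ) = n - 1 then Δ else Δ - 1))
    (u : Fin n → ℤ) (hu : u = fun (i : Fin n) => if (i : ℕ) = k then Δ - n + k else 1) :
    Set.ncard {z : Fin n → ℤ | ∀ i, 0 ≤ B.mulVec z i ∧ B.mulVec z i ≤ u i} = 2 ^ k := by
  subst hB hu
  have hkn' : k < n := by omega
  have hn1 : n - 1 < n := by omega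
  set m : Fin n := ⟨n - 1, hn1⟩ with hm
  set F : Finset (Fin n) := Finset.univ.filter fun j : Fin n => k ≤ (j : ℕ) ∧ (j : ℕ) < n - 1
    with hF
  -- rows i < n - 1
  have hrow : ∀ (z : Fin n → ℤ) (i : Fin n), (i : ℕ) < n - 1 →
      Matrix.mulVec (fun (i j : Fin n) => if (i : ℕ) < n - 1 then (if i = j then 1 else 0)
        else (if (j : ℕ) < k then 0 else if (j : ℕ) = n - 1 then Δ else Δ - 1)) z i = z i := by
    intro z i hi
    simp only [Matrix.mulVec, dotProduct, hi, if_pos]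
    rw [Finset.sum_eq_single i]
    · simp
    · intro j _ hji
      rw [if_neg (Ne.symm hji), zero_mul]
    · intro h; exact absurd (Finset.mem_univ i) h
  -- last row
  have hlast : ∀ z : Fin n → ℤ,
      Matrix.mulVec (fun (i j : Fin n) => if (i : ℕ) < n - 1 then (if i = j then 1 else 0)
        else (if (j : ℕ) < k then 0 else if (j : ℕ) = n - 1 then Δ else Δ - 1)) z m
      = (Δ - 1) * ∑ j ∈ F, z j + Δ * z m := by
    intro z
    simp only [Matrix.mulVec, dotProduct]
    have key : ∀ j : Fin n,
        (if (m : ℕ) < n - 1 then (if m = j then (1:ℤ) else 0)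
          else (if (j : ℕ) < k then 0 else if (j : ℕ) = n - 1 then Δ else Δ - 1)) * z j
        = (if j ∈ F then (Δ - 1) * z j else 0) + (if j = m then Δ * z j else 0) := by
      intro j
      have hm' : ¬((m : ℕ) < n - 1) := by simp [hm]
      rw [if_neg hm']
      by_cases h1 : (j : ℕ) < k
      · have hjF : j ∉ F := by simp [hF]; omega
        have hjm : j ≠ m := by
          intro h; rw [h] at h1; simp [hm] at h1; omega
        rw [if_pos h1, if_neg hjF, if_neg hjm, zero_mul, add_zero]
      · by_cases h2 : (j : ℕ) = n - 1
        · have hjm : j = m := Fin.ext (by simp [hm, h2])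
          have hjF : j ∉ F := by simp [hF]; omega
          rw [if_neg h1, if_pos h2, if_neg hjF, if_pos hjm, zero_add]
        · have hjF : j ∈ F := by
            simp only [hF, Finset.mem_filter, Finset.mem_univ, true_and]
            omega
          have hjm : j ≠ m := by
            intro h; rw [h] at h2; simp [hm] at h2
          rw [if_neg h1, if_neg h2, if_pos hjF, if_neg hjm, add_zero]
    rw [Finset.sum_congr rfl fun j _ => key j, Finset.sum_add_distrib,
      Finset.sum_ite_mem, Finset.univ_inter, Finset.sum_ite_eq' Finset.univ m,
      if_pos (Finset.mem_univ m), ← Finset.mul_sum]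
  have hmne : ∀ i : Fin n, ¬ ((i:ℕ) < n - 1) → i = m := by
    intro i hi
    exact Fin.ext (by simp [hm]; omega)
  -- the candidate finset
  set t : (i : Fin n) → Finset ℤ := fun i => if (i : ℕ) < k then ({0, 1} : Finset ℤ) else {0}
    with ht
  have hset : {z : Fin n → ℤ | ∀ i, 0 ≤ Matrix.mulVec (fun (i j : Fin n) =>
        if (i : ℕ) < n - 1 then (if i = j then 1 else 0)
        else (if (j : ℕ) < k then 0 else if (j : ℕ) = n - 1 then Δ else Δ - 1)) z i ∧
      Matrix.mulVec (fun (i j : Fin n) => if (i : ℕ) < n - 1 then (if i = j then 1 else 0)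
        else (if (j : ℕ) < k then 0 else if (j : ℕ) = n - 1 then Δ else Δ - 1)) z i ≤
      (fun (i : Fin n) => if (i : ℕ) = k then Δ - n + k else 1) i}
      = ↑(Fintype.piFinset t) := by
    ext z
    simp only [Set.mem_setOf_eq, Finset.coe_sort_coe, Finset.mem_coe, Fintype.mem_piFinset]
    constructor
    · intro h
      -- basic bounds on coordinates i < n - 1
      have hb : ∀ i : Fin n, (i : ℕ) < n - 1 → 0 ≤ z i ∧ z i ≤
          (if (i : ℕ) = k then Δ - n + k else 1) := by
        intro i hi
        have := h i
        rwa [hrow z i hi] at this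
      have hS0 : 0 ≤ ∑ j ∈ F, z j := by
        apply Finset.sum_nonneg
        intro j hj
        simp only [hF, Finset.mem_filter, Finset.mem_univ, true_and] at hj
        exact (hb j hj.2).1
      -- key claim: z m = 0 and z j = 0 on F
      have hmain : z m = 0 ∧ ∀ j ∈ F, z j = 0 := by
        have hVm := h m
        rw [hlast z] at hVm
        by_cases hk : k = n - 1
        · have hFempty : F = ∅ := by
            ext j
            simp only [hF, Finset.mem_filter, Finset.mem_univ, true_and, Finset.notMem_empty,
              iff_false]
            omega
          rw [hFempty] at hS0 hVm ⊢
          simp only [Finset.sum_empty, mul_zero, zero_add] at hVm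
          have hmk : (m : ℕ) = k := by simp [hm]; omega
          rw [if_pos hmk] at hVm
          have hΔpos : (0:ℤ) < Δ := by omega
          constructor
          · nlinarith [hVm.1, hVm.2]
          · intro j hj; exact absurd hj (by simp)
        · -- k < n - 1 case
          have hkn2 : k < n - 1 := by omega
          have hmk : ¬ ((m : ℕ) = k) := by simp [hm]; omega
          rw [if_neg hmk] at hVm
          -- sum of upper bounds on F
          have hFcard : F.card = n - 1 - k := by
            have : F = Finset.Ico (⟨k, hkn'⟩ : Fin n) m := by
              ext j
              simp [hF, Finset.mem_Ico, Fin.le_def, Fin.lt_def, hm]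
            rw [this, Fin.card_Ico]
          have hSle : ∑ j ∈ F, z j ≤ Δ - 2 := by
            have h1 : ∑ j ∈ F, z j ≤ ∑ j ∈ F, (if (j : ℕ) = k then Δ - n + k else 1) := by
              apply Finset.sum_le_sum
              intro j hj
              simp only [hF, Finset.mem_filter, Finset.mem_univ, true_and] at hj
              exact (hb j hj.2).2
            have h2 : ∑ j ∈ F, (if (j : ℕ) = k then Δ - (n:ℤ) + k else 1)
                = ∑ j ∈ F, ((if j = (⟨k, hkn'⟩ : Fin n) then Δ - (n:ℤ) + k - 1 else 0) + 1) := by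
              apply Finset.sum_congr rfl
              intro j _
              by_cases hjk : (j : ℕ) = k
              · rw [if_pos hjk, if_pos (Fin.ext hjk)]; ring
              · rw [if_neg hjk, if_neg (fun h => hjk (by rw [h]))]; ring
            have hkF : (⟨k, hkn'⟩ : Fin n) ∈ F := by
              simp only [hF, Finset.mem_filter, Finset.mem_univ, true_and]
              exact ⟨le_refl k, hkn2⟩
            rw [h2, Finset.sum_add_distrib, Finset.sum_ite_eq' F, if_pos hkF,
              Finset.sum_const, nsmul_eq_mul, mul_one, hFcard] at h1
            have hc : ((n - 1 - k : ℕ) : ℤ) = (n : ℤ) - 1 - k := by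
              push_cast [Nat.cast_sub (le_of_lt hkn2), Nat.cast_sub (le_of_lt hn1)]
              omega
            rw [hc] at h1
            omega
          -- number theory: (Δ-1) S + Δ t ∈ [0,1], 0 ≤ S ≤ Δ-2 → S = 0, t = 0
          set S := ∑ j ∈ F, z j with hSdef
          have hq : S + z m = 0 ∧ S = 0 := by
            set q : ℤ := S + z m with hqdef
            have hV : (Δ - 1) * S + Δ * z m = Δ * q - S := by rw [hqdef]; ring
            rw [hV] at hVm
            have hΔ3 : (3:ℤ) ≤ Δ := by omega
            have hq0 : q = 0 := by
              rcases lt_trichotomy q 0 with hq' | hq' | hq'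
              · exfalso; nlinarith [hVm.1, hq']
              · exact hq'
              · exfalso; nlinarith [hVm.2, hq']
            rw [hq0] at hVm
            simp only [mul_zero, zero_sub] at hVm
            constructor
            · exact hq0
            · omega
          have hSzero : S = 0 := hq.2
          constructor
          · have := hq.1; omega
          · intro j hj
            rw [Finset.sum_eq_zero_iff_of_nonneg ?_ ] at hSzero
            · exact hSzero j hj
            · intro i hi
              simp only [hF, Finset.mem_filter, Finset.mem_univ, true_and] at hi
              exact (hb i hi.2).1
      -- now conclude membership
      intro i
      by_cases h1 : (i : ℕ) < k
      · rw [ht]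
        simp only [if_pos h1, Finset.mem_insert, Finset.mem_singleton]
        have hi : (i : ℕ) < n - 1 := by omega
        have := hb i hi
        rw [if_neg (by omega)] at this
        omega
      · rw [ht]
        simp only [if_neg h1, Finset.mem_singleton]
        by_cases h2 : (i : ℕ) < n - 1
        · exact hmain.2 i (by simp only [hF, Finset.mem_filter, Finset.mem_univ, true_and]; omega)
        · rw [hmne i h2]; exact hmain.1
    · -- converse
      intro h i
      have hz : ∀ j : Fin n, 0 ≤ z j ∧ z j ≤ 1 ∧ ((j:ℕ) ≥ k → z j = 0) := by
        intro j
        have := h j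
        rw [ht] at this
        by_cases h1 : (j : ℕ) < k
        · simp only [if_pos h1, Finset.mem_insert, Finset.mem_singleton] at this
          refine ⟨by omega, by omega, fun hc => by omega⟩
        · simp only [if_neg h1, Finset.mem_singleton] at this
          exact ⟨by omega, by omega, fun _ => this⟩
      by_cases h2 : (i : ℕ) < n - 1
      · rw [hrow z i h2]
        obtain ⟨ha, hb', hc⟩ := hz i
        by_cases h3 : (i : ℕ) = k
        · simp only [if_pos h3]
          have : z i = 0 := hc (by omega)
          constructor <;> omega
        · simp only [if_neg h3]
          exact ⟨ha, hb'⟩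
      · rw [hmne i h2, hlast z]
        have hFz : ∑ j ∈ F, z j = 0 := by
          apply Finset.sum_eq_zero
          intro j hj
          simp only [hF, Finset.mem_filter, Finset.mem_univ, true_and] at hj
          exact (hz j).2.2 hj.1
        have hzm : z m = 0 := (hz m).2.2 (by simp [hm]; omega)
        rw [hFz, hzm]
        simp only [mul_zero, add_zero, le_refl, true_and]
        split <;> omega
  rw [hset, Set.ncard_coe_finset, Fintype.card_piFinset]
  have : ∀ i : Fin n, (t i).card = if (i : ℕ) < k then 2 else 1 := by
    intro i
    rw [ht]
    by_cases h1 : (i : ℕ) < k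
    · simp [if_pos h1]
    · simp [if_neg h1]
  rw [Finset.prod_congr rfl fun i _ => this i, Finset.prod_ite, Finset.prod_const,
    Finset.prod_const, one_pow, mul_one]
  congr 1
  have : (Finset.univ.filter fun i : Fin n => (i : ℕ) < k) = Finset.Iio (⟨k, hkn'⟩ : Fin n) := by
    ext i
    simp [Finset.mem_Iio, Fin.lt_def]
  rw [this, Fin.card_Iio]
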